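/- Let T be a tree (a connected acyclic graph) and S a finite nonempty set of vertices of T. Define the center of S to be the middle vertex or middle edge of a longest path in T between two vertices of S. Then the center is well-defined: any two longest paths between vertices of S have the same middle vertex (if the maximal distance is even) or the same middle edge (if it is odd). -/

import Mathlib

set_option maxHeartbeats 1000000

open SimpleGraph

section TreeAux

variable {V : Type*} {T : SimpleGraph V} [DecidableEq V]

/-- In a tree, every path realizes the distance. -/
private lemma tlen (hT : T.IsTree) {u v : V} {p : T.Walk u v} (hp : p.IsPath) :
    p.length = T.dist u v := by
  obtain ⟨q, hq, hql⟩ := hT.isConnected.exists_path_of_dist u v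
  have h : (⟨p, hp⟩ : T.Path u v) = ⟨q, hq⟩ := hT.IsAcyclic.path_unique _ _
  rw [show p = q from congrArg Subtype.val h, hql]

/-- Vertices on a path in a tree are "between" the endpoints. -/
private lemma tbtw (hT : T.IsTree) {u v z : V} {p : T.Walk u v} (hp : p.IsPath)
    (hz : z ∈ p.support) : T.dist u z + T.dist z v = T.dist u v := by
  have h1 := tlen hT (hp.takeUntil hz)
  have h2 := tlen hT (hp.dropUntil hz)
  have h3 := tlen hT hp
  have h4 := congrArg SimpleGraph.Walk.length (p.take_spec hz)
  rw [SimpleGraph.Walk.length_append] at h4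
  omega

/-- Conversely, a vertex between the endpoints lies on the path. -/
private lemma tmem (hT : T.IsTree) {u v z : V}
    (h : T.dist u z + T.dist z v = T.dist u v)
    {p : T.Walk u v} (hp : p.IsPath) : z ∈ p.support := by
  obtain ⟨q1, hq1, l1⟩ := hT.isConnected.exists_path_of_dist u z
  obtain ⟨q2, hq2, l2⟩ := hT.isConnected.exists_path_of_dist z v
  have hWl : (q1.append q2).length = T.dist u v := by
    rw [SimpleGraph.Walk.length_append]; omega
  have hWp : (q1.append q2).IsPath := SimpleGraph.Walk.isPath_of_length_eq_dist _ hWl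
  have hz : z ∈ (q1.append q2).support := by
    rw [SimpleGraph.Walk.mem_support_append_iff]
    exact Or.inl q1.end_mem_support
  have heq : (⟨q1.append q2, hWp⟩ : T.Path u v) = ⟨p, hp⟩ := hT.IsAcyclic.path_unique _ _
  rwa [show q1.append q2 = p from congrArg Subtype.val heq] at hz

/-- Appending two paths that only share the junction vertex gives a path. -/
private lemma tapp {x y z : V} {p : T.Walk x y} {q : T.Walk y z}
    (hp : p.IsPath) (hq : q.IsPath) (h : ∀ a ∈ p.support, a ∈ q.support → a = y) :
    (p.append q).IsPath := by
  rw [SimpleGraph.Walk.isPath_def, SimpleGraph.Walk.support_append, List.nodup_append]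
  refine ⟨hp.support_nodup, hq.support_nodup.sublist (List.tail_sublist _), ?_⟩
  intro a hap b haq hab
  rw [← hab] at haq
  have haq' : a ∈ q.support := List.mem_of_mem_tail haq
  have : a = y := h a hap haq'
  subst this
  have := hq.support_nodup
  rw [q.support_eq_cons] at this
  exact (List.nodup_cons.mp this).1 haq

/-- A path inside a path's support connecting two of its vertices. -/
private lemma tseg (hT : T.IsTree) {u v y z : V} {P : T.Walk u v} (hP : P.IsPath)
    (hy : y ∈ P.support) (hz : z ∈ P.support) :
    ∃ S : T.Walk y z, S.IsPath ∧ ∀ a ∈ S.support, a ∈ P.support := by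
  by_cases h : z ∈ (P.dropUntil y hy).support
  · refine ⟨(P.dropUntil y hy).takeUntil z h, (hP.dropUntil hy).takeUntil h, ?_⟩
    intro a ha
    exact P.support_dropUntil_subset hy ((SimpleGraph.Walk.support_takeUntil_subset _ h) ha)
  · have hz' : z ∈ (P.takeUntil y hy).support := by
      have hsp := P.take_spec hy
      rw [← hsp, SimpleGraph.Walk.mem_support_append_iff] at hz
      exact hz.resolve_right h
    refine ⟨((P.takeUntil y hy).dropUntil z hz').reverse,
      ((hP.takeUntil hy).dropUntil hz').reverse, ?_⟩
    intro a ha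
    rw [SimpleGraph.Walk.support_reverse, List.mem_reverse] at ha
    exact P.support_takeUntil_subset hy
      ((SimpleGraph.Walk.support_dropUntil_subset _ hz') ha)

/-- Gate / projection lemma: for any vertex `x` and path `P`, there is a vertex `y` on
`P` through which all geodesics from `x` to `P` pass. -/
private lemma tgate (hT : T.IsTree) {u v : V} {P : T.Walk u v} (hP : P.IsPath) (x : V) :
    ∃ y ∈ P.support, ∀ z ∈ P.support, T.dist x z = T.dist x y + T.dist y z := by
  classical
  obtain ⟨y, hyS, hymin⟩ := P.support.toFinset.exists_min_image (T.dist x)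
    ⟨u, List.mem_toFinset.mpr P.start_mem_support⟩
  rw [List.mem_toFinset] at hyS
  refine ⟨y, hyS, fun z hz => ?_⟩
  obtain ⟨R, hR, hRl⟩ := hT.isConnected.exists_path_of_dist x y
  have hkey : ∀ a ∈ R.support, a ∈ P.support → a = y := by
    intro a haR haP
    have h1 := tbtw hT hR haR
    have h2 := hymin a (List.mem_toFinset.mpr haP)
    have h0 : T.dist a y = 0 := by omega
    exact hT.isConnected.dist_eq_zero_iff.mp h0
  obtain ⟨Sg, hSg, hSgsub⟩ := tseg hT hP hyS hz
  have hpath : (R.append Sg).IsPath := tapp hR hSg (fun a ha ha' => hkey a ha (hSgsub a ha'))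
  have hl := tlen hT hpath
  rw [SimpleGraph.Walk.length_append, hRl, tlen hT hSg] at hl
  omega

/-- Two vertices on a path in a tree: one is between the start and the other. -/
private lemma torder (hT : T.IsTree) {u v w y : V} {P : T.Walk u v} (hP : P.IsPath)
    (hw : w ∈ P.support) (hy : y ∈ P.support) :
    T.dist u w + T.dist w y = T.dist u y ∨ T.dist u y + T.dist y w = T.dist u w := by
  by_cases h : y ∈ (P.dropUntil w hw).support
  · left
    have hb := tbtw hT (hP.dropUntil hw) h
    have h1 := tbtw hT hP hw
    have h2 := tbtw hT hP hy
    omega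
  · right
    have hy' : y ∈ (P.takeUntil w hw).support := by
      have hsp := P.take_spec hw
      rw [← hsp, SimpleGraph.Walk.mem_support_append_iff] at hy
      exact hy.resolve_right h
    exact tbtw hT (hP.takeUntil hw) hy'

/-- Distances to the two endpoints of an edge differ by exactly one. -/
private lemma tstep (hT : T.IsTree) {a b : V} (hab : T.Adj a b) (u : V) :
    T.dist u b = T.dist u a + 1 ∨ T.dist u a = T.dist u b + 1 := by
  obtain ⟨P, hP, hPl⟩ := hT.isConnected.exists_path_of_dist u a
  by_cases h : b ∈ P.support
  · right
    have h1 := tbtw hT hP h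
    have h2 : T.dist b a = 1 := SimpleGraph.dist_eq_one_iff_adj.mpr hab.symm
    omega
  · left
    have hcons : (SimpleGraph.Walk.cons hab (SimpleGraph.Walk.nil)).IsPath :=
      (SimpleGraph.Path.singleton hab).2
    have hQ : (P.append (SimpleGraph.Walk.cons hab SimpleGraph.Walk.nil)).IsPath := by
      refine tapp hP hcons ?_
      intro z hzP hzc
      simp only [SimpleGraph.Walk.support_cons, SimpleGraph.Walk.support_nil,
        List.mem_cons, List.mem_singleton] at hzc
      rcases hzc with rfl | rfl | hzc
      · rfl
      · exact absurd hzP h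
      · simp at hzc
    have := tlen hT hQ
    rw [SimpleGraph.Walk.length_append] at this
    simp only [SimpleGraph.Walk.length_cons, SimpleGraph.Walk.length_nil] at this
    omega

/-- Key lemma: if `w` is between `u` and `v`, then for every `x`, `w` is between `x`
and `u` or between `x` and `v`. -/
private lemma tL1 (hT : T.IsTree) {u v w : V} (h : T.dist u w + T.dist w v = T.dist u v)
    (x : V) :
    T.dist x w + T.dist w u = T.dist x u ∨ T.dist x w + T.dist w v = T.dist x v := by
  obtain ⟨q1, hq1, l1⟩ := hT.isConnected.exists_path_of_dist u w
  obtain ⟨q2, hq2, l2⟩ := hT.isConnected.exists_path_of_dist w v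
  have hWl : (q1.append q2).length = T.dist u v := by
    rw [SimpleGraph.Walk.length_append]; omega
  have hWp : (q1.append q2).IsPath := SimpleGraph.Walk.isPath_of_length_eq_dist _ hWl
  have hw : w ∈ (q1.append q2).support := by
    rw [SimpleGraph.Walk.mem_support_append_iff]
    exact Or.inl q1.end_mem_support
  obtain ⟨y, hy, hgate⟩ := tgate hT hWp x
  have h1 := hgate u (q1.append q2).start_mem_support
  have h2 := hgate v (q1.append q2).end_mem_support
  have h3 := hgate w hw
  have h4 := tbtw hT hWp hy
  have h5 := torder hT hWp hw hy
  have c1 : T.dist w u = T.dist u w := SimpleGraph.dist_comm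
  have c2 : T.dist y u = T.dist u y := SimpleGraph.dist_comm
  have c3 : T.dist y w = T.dist w y := SimpleGraph.dist_comm
  omega

/-- Uniqueness of the point at a given distance along the geodesic. -/
private lemma tuniq (hT : T.IsTree) {u v w w' : V}
    (h : T.dist u w + T.dist w v = T.dist u v)
    (h' : T.dist u w' + T.dist w' v = T.dist u v)
    (he : T.dist u w = T.dist u w') : w = w' := by
  obtain ⟨P, hP, _⟩ := hT.isConnected.exists_path_of_dist u v
  have hw := tmem hT h hP
  have hw' := tmem hT h' hP
  have ho := torder hT hP hw hw'
  have c1 : T.dist w' w = T.dist w w' := SimpleGraph.dist_comm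
  have h0 : T.dist w w' = 0 := by omega
  exact hT.isConnected.dist_eq_zero_iff.mp h0

/-- Splitting a walk at position `k`. -/
private lemma tsplit {a b : V} (p : T.Walk a b) :
    ∀ k : ℕ, k ≤ p.length →
      ∃ (c : V) (q : T.Walk a c) (r : T.Walk c b), q.length = k ∧ k + r.length = p.length := by
  induction p with
  | nil =>
    intro k hk
    simp only [SimpleGraph.Walk.length_nil, Nat.le_zero] at hk
    subst hk
    exact ⟨_, SimpleGraph.Walk.nil, SimpleGraph.Walk.nil, rfl, rfl⟩
  | @cons a c b h p ih =>
    intro k hk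
    cases k with
    | zero => exact ⟨a, SimpleGraph.Walk.nil, SimpleGraph.Walk.cons h p, rfl, by simp⟩
    | succ k =>
      simp only [SimpleGraph.Walk.length_cons] at hk
      obtain ⟨c', q, r, hq, hr⟩ := ih k (by omega)
      exact ⟨c', SimpleGraph.Walk.cons h q, r, by simp [hq],
        by simp only [SimpleGraph.Walk.length_cons]; omega⟩

/-- Splitting a walk at an edge. -/
private lemma tsplitE {a b : V} (p : T.Walk a b) (k : ℕ) (hk : k < p.length) :
    ∃ (c c' : V) (q : T.Walk a c) (r : T.Walk c' b),
      T.Adj c c' ∧ q.length = k ∧ (k + 1) + r.length = p.length := by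
  obtain ⟨c, q, r, hq, hr⟩ := tsplit p k hk.le
  cases r with
  | nil => exfalso; simp only [SimpleGraph.Walk.length_nil] at hr; omega
  | @cons c c'' b hadj r' =>
    refine ⟨c, c'', q, r', hadj, hq, ?_⟩
    simp only [SimpleGraph.Walk.length_cons] at hr
    omega

/-- Pure arithmetic for the odd case. -/
private lemma oddArith (m duw1 duw2 dvw1 dvw2 : ℕ)
    (h1 : duw1 ≤ m + 1) (h2 : duw2 ≤ m + 1) (h3 : dvw1 ≤ m + 1) (h4 : dvw2 ≤ m + 1)
    (ht1 : 2 * m + 1 ≤ duw1 + dvw1) (ht2 : 2 * m + 1 ≤ duw2 + dvw2)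
    (hs : duw2 = duw1 + 1 ∨ duw1 = duw2 + 1)
    (hsv : dvw2 = dvw1 + 1 ∨ dvw1 = dvw2 + 1) :
    (duw1 = m ∧ duw2 = m + 1 ∧ dvw1 = m + 1 ∧ dvw2 = m) ∨
      (duw2 = m ∧ duw1 = m + 1 ∧ dvw2 = m + 1 ∧ dvw1 = m) := by
  omega

end TreeAux

/- STATEMENT 8: In a tree `T`, for a finite nonempty set `S` of vertices, the centre of
`S` — the middle vertex (if the diameter `d` of `S` is even) or middle edge (if `d` is
odd) of a longest path between two vertices of `S` — is well defined: it does not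
depend on the choice of longest path. -/

theorem tree_center_well_defined
    (V : Type*) (T : SimpleGraph V) (hT : T.IsTree)
    (S : Finset V) (hS : S.Nonempty)
    (d : ℕ) (hd : d = (S ×ˢ S).sup fun p => T.dist p.1 p.2) :
    (∀ m : ℕ, d = 2 * m →
      ∃! w : V, ∀ u ∈ S, ∀ v ∈ S, T.dist u v = d →
        T.dist u w = m ∧ T.dist w v = m) ∧
    (∀ m : ℕ, d = 2 * m + 1 →
      ∃! e : Sym2 V, e ∈ T.edgeSet ∧ ∀ u ∈ S, ∀ v ∈ S, T.dist u v = d →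
        ∃ w₁ w₂ : V, e = s(w₁, w₂) ∧ T.dist u w₁ = m ∧ T.dist u w₂ = m + 1 ∧
          T.dist w₁ v = m + 1 ∧ T.dist w₂ v = m) := by
  classical
  have hconn := hT.isConnected
  obtain ⟨⟨u₀, v₀⟩, hp0S, hp0⟩ := (S ×ˢ S).exists_mem_eq_sup (hS.product hS)
    (fun p => T.dist p.1 p.2)
  obtain ⟨hu0, hv0⟩ := Finset.mem_product.mp hp0S
  have hdist0 : T.dist u₀ v₀ = d := by rw [hd]; exact hp0.symm
  have hbd : ∀ a ∈ S, ∀ b ∈ S, T.dist a b ≤ d := by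
    intro a ha b hb
    rw [hd]
    exact Finset.le_sup (b := (a, b)) (f := fun p => T.dist p.1 p.2)
      (Finset.mem_product.mpr ⟨ha, hb⟩)
  obtain ⟨P0, hP0, hP0l⟩ := hconn.exists_path_of_dist u₀ v₀
  rw [hdist0] at hP0l
  constructor
  · -- even case
    intro m hm
    obtain ⟨w, q, r, hq, hr⟩ := tsplit P0 m (by omega)
    have hq1 : T.dist u₀ w ≤ m := hq ▸ SimpleGraph.dist_le q
    have hr1 : T.dist w v₀ ≤ m := by
      have := SimpleGraph.dist_le r; omega
    have htri : T.dist u₀ v₀ ≤ T.dist u₀ w + T.dist w v₀ := hconn.dist_triangle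
    have huw : T.dist u₀ w = m := by omega
    have hwv : T.dist w v₀ = m := by omega
    have hbtw : T.dist u₀ w + T.dist w v₀ = T.dist u₀ v₀ := by omega
    have hprop : ∀ u ∈ S, ∀ v ∈ S, T.dist u v = d →
        T.dist u w = m ∧ T.dist w v = m := by
      intro u hu v hv huv
      have hL1u := tL1 hT hbtw u
      have hL1v := tL1 hT hbtw v
      have c1 : T.dist w u₀ = T.dist u₀ w := SimpleGraph.dist_comm
      have c2 : T.dist w v₀ = T.dist v₀ w := SimpleGraph.dist_comm
      have c2' : T.dist v₀ w = T.dist w v₀ := SimpleGraph.dist_comm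
      have b1 := hbd u hu u₀ hu0
      have b2 := hbd u hu v₀ hv0
      have b3 := hbd v hv u₀ hu0
      have b4 := hbd v hv v₀ hv0
      have hu_le : T.dist u w ≤ m := by omega
      have hv_le : T.dist v w ≤ m := by omega
      have c3 : T.dist w v = T.dist v w := SimpleGraph.dist_comm
      have htri2 : T.dist u v ≤ T.dist u w + T.dist w v := hconn.dist_triangle
      omega
    refine ⟨w, hprop, ?_⟩
    intro w' hprop'
    obtain ⟨h1', h2'⟩ := hprop' u₀ hu0 v₀ hv0 hdist0
    have hbtw' : T.dist u₀ w' + T.dist w' v₀ = T.dist u₀ v₀ := by omega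
    exact tuniq hT hbtw' hbtw (by omega)
  · -- odd case
    intro m hm
    obtain ⟨w₁, w₂, q, r, hadj, hq, hr⟩ := tsplitE P0 m (by omega)
    have hq1 : T.dist u₀ w₁ ≤ m := hq ▸ SimpleGraph.dist_le q
    have hr1 : T.dist w₂ v₀ ≤ m := by
      have hdr := SimpleGraph.dist_le r
      clear * - hdr hr hP0l hm
      omega
    have hadj1 : T.dist w₁ w₂ = 1 := SimpleGraph.dist_eq_one_iff_adj.mpr hadj
    have htri : T.dist u₀ v₀ ≤ T.dist u₀ w₁ + T.dist w₁ v₀ := hconn.dist_triangle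
    have htri2 : T.dist w₁ v₀ ≤ T.dist w₁ w₂ + T.dist w₂ v₀ := hconn.dist_triangle
    have htri3 : T.dist u₀ v₀ ≤ T.dist u₀ w₂ + T.dist w₂ v₀ := hconn.dist_triangle
    have htri4 : T.dist u₀ w₂ ≤ T.dist u₀ w₁ + T.dist w₁ w₂ := hconn.dist_triangle
    have huw1 : T.dist u₀ w₁ = m := by
      clear * - hq1 hr1 hadj1 htri htri2 hdist0 hm; omega
    have hw1v : T.dist w₁ v₀ = m + 1 := by
      clear * - hq1 hr1 hadj1 htri htri2 hdist0 hm; omega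
    have huw2 : T.dist u₀ w₂ = m + 1 := by
      clear * - hq1 hr1 hadj1 htri3 htri4 huw1 hdist0 hm; omega
    have hw2v : T.dist w₂ v₀ = m := by
      clear * - hr1 htri3 huw2 hdist0 hm; omega
    have hbtw1 : T.dist u₀ w₁ + T.dist w₁ v₀ = T.dist u₀ v₀ := by
      clear * - huw1 hw1v hdist0 hm; omega
    have hbtw2 : T.dist u₀ w₂ + T.dist w₂ v₀ = T.dist u₀ v₀ := by
      clear * - huw2 hw2v hdist0 hm; omega
    have hedge : s(w₁, w₂) ∈ T.edgeSet := T.mem_edgeSet.mpr hadj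
    have hprop : ∀ u ∈ S, ∀ v ∈ S, T.dist u v = d →
        ∃ a b : V, s(w₁, w₂) = s(a, b) ∧ T.dist u a = m ∧ T.dist u b = m + 1 ∧
          T.dist a v = m + 1 ∧ T.dist b v = m := by
      intro u hu v hv huv
      have hL1u1 := tL1 hT hbtw1 u
      have hL1u2 := tL1 hT hbtw2 u
      have hL1v1 := tL1 hT hbtw1 v
      have hL1v2 := tL1 hT hbtw2 v
      have c1 : T.dist w₁ u₀ = T.dist u₀ w₁ := SimpleGraph.dist_comm
      have c2 : T.dist w₂ u₀ = T.dist u₀ w₂ := SimpleGraph.dist_comm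
      have c3 : T.dist w₁ v = T.dist v w₁ := SimpleGraph.dist_comm
      have c4 : T.dist w₂ v = T.dist v w₂ := SimpleGraph.dist_comm
      have b1 := hbd u hu u₀ hu0
      have b2 := hbd u hu v₀ hv0
      have b3 := hbd v hv u₀ hu0
      have b4 := hbd v hv v₀ hv0
      have hu1_le : T.dist u w₁ ≤ m + 1 := by
        clear * - hL1u1 c1 huw1 hw1v b1 b2 hm; omega
      have hu2_le : T.dist u w₂ ≤ m + 1 := by
        clear * - hL1u2 c2 huw2 hw2v b1 b2 hm; omega
      have hv1_le : T.dist v w₁ ≤ m + 1 := by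
        clear * - hL1v1 c1 huw1 hw1v b3 b4 hm; omega
      have hv2_le : T.dist v w₂ ≤ m + 1 := by
        clear * - hL1v2 c2 huw2 hw2v b3 b4 hm; omega
      have htu1 : T.dist u v ≤ T.dist u w₁ + T.dist w₁ v := hconn.dist_triangle
      have htu2 : T.dist u v ≤ T.dist u w₂ + T.dist w₂ v := hconn.dist_triangle
      have hstu := tstep hT hadj u
      have hstv := tstep hT hadj v
      have hstv' : T.dist v w₂ = T.dist v w₁ + 1 ∨ T.dist v w₁ = T.dist v w₂ + 1 := hstv
      rcases oddArith m (T.dist u w₁) (T.dist u w₂) (T.dist v w₁) (T.dist v w₂)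
        hu1_le hu2_le hv1_le hv2_le
        (by clear * - htu1 c3 huv hm; omega)
        (by clear * - htu2 c4 huv hm; omega) hstu hstv' with
        ⟨e1, e2, e3, e4⟩ | ⟨e1, e2, e3, e4⟩
      · exact ⟨w₁, w₂, rfl, e1, e2, by clear * - e3 c3; omega,
          by clear * - e4 c4; omega⟩
      · exact ⟨w₂, w₁, Sym2.eq_swap, e1, e2, by clear * - e3 c4; omega,
          by clear * - e4 c3; omega⟩
    refine ⟨s(w₁, w₂), ⟨hedge, hprop⟩, ?_⟩
    rintro e' ⟨he'edge, he'prop⟩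
    obtain ⟨a, b, hab, d1, d2, d3, d4⟩ := he'prop u₀ hu0 v₀ hv0 hdist0
    have hba : T.dist u₀ a + T.dist a v₀ = T.dist u₀ v₀ := by
      clear * - d1 d3 hdist0 hm; omega
    have hbb : T.dist u₀ b + T.dist b v₀ = T.dist u₀ v₀ := by
      clear * - d2 d4 hdist0 hm; omega
    have ha : a = w₁ := tuniq hT hba hbtw1 (by clear * - d1 huw1; omega)
    have hb : b = w₂ := tuniq hT hbb hbtw2 (by clear * - d2 huw2; omega)
    rw [hab, ha, hb]
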